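/- Let G be a finite group, H ≤ G a subgroup, x_1 = 1, x_2, …, x_s a complete set of representatives for the double cosets of H in G, and let V be an irreducible finite-dimensional complex representation of G whose character χ_V takes only rational values and which satisfies dim_ℂ V^H = 1. Then for every i = 1, …, s the following eigenvalue identity holds in ℂ[G]: q_i · (p_H · e_V) = χ_V(q_i) · (p_H · e_V), where q_i := (1/|H|) · ∑_{y ∈ Hx_iH} y. -/

import Mathlib

open scoped Classical

/-- The averaging idempotent `p_H = (1/|H|) ∑_{h ∈ H} h` in the complex group algebra. -/
noncomputable def avgIdemC {G : Type*} [Group G] [Fintype G] (H : Subgroup G) :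
    MonoidAlgebra ℂ G :=
  (Nat.card H : ℂ)⁻¹ • ∑ h ∈ (H : Set G).toFinset, MonoidAlgebra.single h (1 : ℂ)

/-- The double coset `HxH` as a finset. -/
noncomputable def dosetFinset {G : Type*} [Group G] [Fintype G] (H : Subgroup G) (x : G) :
    Finset G :=
  {y : G | ∃ h ∈ H, ∃ h' ∈ H, y = h * x * h'}.toFinset

/-- The character of a finite-dimensional representation. -/
noncomputable def repChar {G V : Type*} [Group G] [AddCommGroup V] [Module ℂ V]
    (ρ : Representation ℂ G V) (g : G) : ℂ :=
  LinearMap.trace ℂ V (ρ g)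

/-- Irreducibility: `V` is nonzero and has no proper nonzero `G`-invariant subspace. -/
def IsIrreducibleRep {G V : Type*} [Group G] [AddCommGroup V] [Module ℂ V]
    (ρ : Representation ℂ G V) : Prop :=
  Nontrivial V ∧ ∀ W : Submodule ℂ V, (∀ g : G, ∀ v ∈ W, ρ g v ∈ W) → W = ⊥ ∨ W = ⊤

/-- The subspace `V^H` of `H`-fixed vectors. -/
def fixedSubmodule {G V : Type*} [Group G] [AddCommGroup V] [Module ℂ V]
    (ρ : Representation ℂ G V) (H : Subgroup G) : Submodule ℂ V where
  carrier := {v : V | ∀ h ∈ H, ρ h v = v}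
  add_mem' := by
    intro a b ha hb h hh
    simp [map_add, ha h hh, hb h hh]
  zero_mem' := by
    intro h hh
    simp
  smul_mem' := by
    intro c v hv h hh
    simp [map_smul, hv h hh]

/-- The central idempotent `e_V = (dim V / |G|) ∑_{g} χ_V(g⁻¹) g` of `ℂ[G]`. -/
noncomputable def centralIdem {G V : Type*} [Group G] [Fintype G] [AddCommGroup V]
    [Module ℂ V] (ρ : Representation ℂ G V) : MonoidAlgebra ℂ G :=
  ((Module.finrank ℂ V : ℂ) / (Fintype.card G : ℂ)) •
    ∑ g : G, repChar ρ g⁻¹ • MonoidAlgebra.single g (1 : ℂ)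

/-- The Hecke algebra basis element `q_x = (1/|H|) ∑_{y ∈ HxH} y`. -/
noncomputable def heckeElt {G : Type*} [Group G] [Fintype G] (H : Subgroup G) (x : G) :
    MonoidAlgebra ℂ G :=
  (Nat.card H : ℂ)⁻¹ • ∑ y ∈ dosetFinset H x, MonoidAlgebra.single y (1 : ℂ)

section AuxLemmas

set_option linter.unusedSectionVars false

variable {G V : Type*} [Group G] [Fintype G] [AddCommGroup V] [Module ℂ V]
  [FiniteDimensional ℂ V] (ρ : Representation ℂ G V) (H : Subgroup G)

/-- Fourier-type formula for the coefficients of `a * e_V`. -/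
lemma coeff_mul_centralIdem (a : MonoidAlgebra ℂ G) (g : G) :
    (a * centralIdem ρ).coeff g =
      ((Module.finrank ℂ V : ℂ) / (Fintype.card G : ℂ)) *
        LinearMap.trace ℂ V (ρ.asAlgebraHom a * ρ g⁻¹) := by
  induction a using MonoidAlgebra.induction_linear with
  | zero => simp
  | add f f' hf hf' =>
      rw [add_mul, MonoidAlgebra.coeff_add, Finsupp.add_apply, hf, hf', map_add, add_mul, map_add, mul_add]
  | single h r =>
      rw [Representation.asAlgebraHom_single]
      unfold centralIdem
      simp only [show ∀ (c : ℂ) (a : G), c • MonoidAlgebra.single a (1:ℂ) = MonoidAlgebra.single a c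
        from fun c a => by simp]
      rw [mul_smul_comm, Finset.mul_sum]
      simp only [MonoidAlgebra.single_mul_single]
      rw [MonoidAlgebra.coeff_smul_apply, MonoidAlgebra.coeff_sum, Finset.sum_apply']
      simp only [MonoidAlgebra.coeff_single]
      rw [Finset.sum_eq_single (h⁻¹ * g)]
      · have key : repChar ρ ((h⁻¹ * g)⁻¹) = LinearMap.trace ℂ V (ρ h * ρ g⁻¹) := by
          rw [mul_inv_rev, inv_inv, show ρ h * ρ g⁻¹ = ρ (h * g⁻¹) from (map_mul ρ h g⁻¹).symm]
          unfold repChar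
          rw [map_mul ρ, map_mul ρ, LinearMap.trace_mul_comm]
        rw [mul_inv_cancel_left, Finsupp.single_eq_same, key, smul_mul_assoc, map_smul]
        simp only [smul_eq_mul]
        try ring
      · intro b _ hb
        have hne : h * b ≠ g := fun hc => hb (by rw [← hc]; group)
        rw [Finsupp.single_apply, if_neg hne]
      · intro hmem
        exact absurd (Finset.mem_univ _) hmem

lemma mem_dosetFinset {x y : G} :
    y ∈ dosetFinset H x ↔ ∃ a ∈ H, ∃ b ∈ H, y = a * x * b := by
  unfold dosetFinset
  rw [Set.mem_toFinset]
  rfl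

lemma mul_mem_dosetFinset {x y h : G} (hh : h ∈ H) (hy : y ∈ dosetFinset H x) :
    h * y ∈ dosetFinset H x := by
  rw [mem_dosetFinset] at hy ⊢
  obtain ⟨a, ha, b, hb, rfl⟩ := hy
  exact ⟨h * a, H.mul_mem hh ha, b, hb, by group⟩

lemma cardH_complex : (((H : Set G).toFinset.card : ℂ)) = (Nat.card H : ℂ) := by
  simp [Set.toFinset_card, Nat.card_eq_fintype_card]

lemma natCardH_ne_zero : (Nat.card H : ℂ) ≠ 0 := by
  have : 0 < Nat.card H := Nat.card_pos
  exact_mod_cast this.ne'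

lemma asAlg_avg : ρ.asAlgebraHom (avgIdemC H) =
    (Nat.card H : ℂ)⁻¹ • ∑ h ∈ (H : Set G).toFinset, ρ h := by
  unfold avgIdemC
  rw [map_smul, map_sum]
  simp [Representation.asAlgebraHom_single]

lemma asAlg_hecke (x : G) : ρ.asAlgebraHom (heckeElt H x) =
    (Nat.card H : ℂ)⁻¹ • ∑ y ∈ dosetFinset H x, ρ y := by
  unfold heckeElt
  rw [map_smul, map_sum]
  simp [Representation.asAlgebraHom_single]

lemma rho_mul_asAlg_hecke (x : G) {h : G} (hh : h ∈ H) :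
    ρ h * ρ.asAlgebraHom (heckeElt H x) = ρ.asAlgebraHom (heckeElt H x) := by
  rw [asAlg_hecke, mul_smul_comm, Finset.mul_sum]
  congr 1
  rw [Finset.sum_congr rfl (fun y _ => (map_mul ρ h y).symm)]
  refine Finset.sum_equiv (Equiv.mulLeft h) (fun y => ?_) (fun y _ => rfl)
  simp only [Equiv.coe_mulLeft]
  constructor
  · intro hy
    exact mul_mem_dosetFinset H hh hy
  · intro hy
    have := mul_mem_dosetFinset H (H.inv_mem hh) hy
    simpa using this

lemma rho_mul_asAlg_avg {h : G} (hh : h ∈ H) :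
    ρ h * ρ.asAlgebraHom (avgIdemC H) = ρ.asAlgebraHom (avgIdemC H) := by
  rw [asAlg_avg, mul_smul_comm, Finset.mul_sum]
  congr 1
  rw [Finset.sum_congr rfl (fun y _ => (map_mul ρ h y).symm)]
  refine Finset.sum_equiv (Equiv.mulLeft h) (fun y => ?_) (fun y _ => rfl)
  simp only [Set.mem_toFinset, SetLike.mem_coe, Equiv.coe_mulLeft]
  exact ⟨fun hy => H.mul_mem hh hy, fun hy => by simpa using H.mul_mem (H.inv_mem hh) hy⟩

lemma asAlg_avg_fixed {v : V} (hv : v ∈ fixedSubmodule ρ H) :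
    ρ.asAlgebraHom (avgIdemC H) v = v := by
  rw [asAlg_avg]
  have : ∀ h ∈ (H : Set G).toFinset, ρ h v = v := by
    intro h hh
    exact hv h (by simpa using hh)
  rw [LinearMap.smul_apply, LinearMap.coe_sum, Finset.sum_apply,
    Finset.sum_congr rfl this, Finset.sum_const]
  rw [← Nat.cast_smul_eq_nsmul ℂ, smul_smul, cardH_complex,
    inv_mul_cancel₀ (natCardH_ne_zero H), one_smul]

end AuxLemmas

/-- If `V` is irreducible with rational-valued character and `dim V^H = 1`, then
for each `i`, `q_i · (p_H · e_V) = χ_V(q_i) · (p_H · e_V)` in `ℂ[G]`, where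
`χ_V(q_i) = (1/|H|) ∑_{y ∈ H x_i H} χ_V(y)`. -/
theorem heckeElt_mul_isotypic_idem {G V : Type*} [Group G] [Fintype G]
    [AddCommGroup V] [Module ℂ V] [FiniteDimensional ℂ V]
    (ρ : Representation ℂ G V) (hirr : IsIrreducibleRep ρ)
    (hrat : ∀ g : G, ∃ q : ℚ, repChar ρ g = (q : ℂ))
    (H : Subgroup G) (hfix : Module.finrank ℂ (fixedSubmodule ρ H) = 1)
    (s : ℕ) (hs : 0 < s) (x : Fin s → G) (hx1 : x ⟨0, hs⟩ = 1)
    (hreps : ∀ g : G, ∃! i : Fin s, ∃ h ∈ H, ∃ h' ∈ H, g = h * x i * h') :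
    ∀ i : Fin s,
      heckeElt H (x i) * (avgIdemC H * centralIdem ρ) =
        ((Nat.card H : ℂ)⁻¹ * ∑ y ∈ dosetFinset H (x i), repChar ρ y) •
          (avgIdemC H * centralIdem ρ) := by
  intro i
  set W := fixedSubmodule ρ H with hW
  set π : Module.End ℂ V := ρ.asAlgebraHom (avgIdemC H) with hπdef
  set Q : Module.End ℂ V := ρ.asAlgebraHom (heckeElt H (x i)) with hQdef
  -- Q and π map into W
  have hQW : ∀ v : V, Q v ∈ W := by
    intro v h hh
    have := congrArg (fun f : Module.End ℂ V => f v) (rho_mul_asAlg_hecke ρ H (x i) hh)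
    simpa [Module.End.mul_apply] using this
  have hπW : ∀ v : V, π v ∈ W := by
    intro v h hh
    have := congrArg (fun f : Module.End ℂ V => f v) (rho_mul_asAlg_avg ρ H hh)
    simpa [Module.End.mul_apply] using this
  have hπid : ∀ v ∈ W, π v = v := fun v hv => asAlg_avg_fixed ρ H hv
  -- π is a projection onto W, so its trace is 1
  have hproj : LinearMap.IsProj W π := ⟨hπW, hπid⟩
  have htrπ : LinearMap.trace ℂ V π = 1 := by
    rw [hproj.trace, hfix, Nat.cast_one]
  -- π ∘ Q = Q
  have hπQ : π * Q = Q := by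
    ext v
    exact hπid (Q v) (hQW v)
  -- W is one-dimensional
  obtain ⟨v₀, hv₀ne, hgen⟩ := finrank_eq_one_iff'.mp hfix
  obtain ⟨μ, hμ⟩ := hgen ⟨Q (v₀ : V), hQW (v₀ : V)⟩
  have hμ' : μ • (v₀ : V) = Q (v₀ : V) := congrArg Subtype.val hμ
  -- Q ∘ π = μ • π
  have hQπ : Q * π = μ • π := by
    ext v
    obtain ⟨cv, hcv⟩ := hgen ⟨π v, hπW v⟩
    have hcv' : cv • (v₀ : V) = π v := congrArg Subtype.val hcv
    calc (Q * π) v = Q (π v) := rfl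
      _ = Q (cv • (v₀ : V)) := by rw [hcv']
      _ = cv • Q (v₀ : V) := map_smul Q cv _
      _ = cv • μ • (v₀ : V) := by rw [hμ']
      _ = μ • (cv • (v₀ : V)) := smul_comm cv μ _
      _ = μ • π v := by rw [hcv']
      _ = (μ • π) v := rfl
  -- identify μ with the normalized character sum
  have htr1 : LinearMap.trace ℂ V (Q * π) = μ := by
    rw [hQπ, map_smul, htrπ, smul_eq_mul, mul_one]
  have htr2 : LinearMap.trace ℂ V (Q * π) = LinearMap.trace ℂ V Q := by
    rw [LinearMap.trace_mul_comm, hπQ]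
  have htrQ : LinearMap.trace ℂ V Q =
      (Nat.card H : ℂ)⁻¹ * ∑ y ∈ dosetFinset H (x i), repChar ρ y := by
    rw [hQdef, asAlg_hecke, map_smul, map_sum, smul_eq_mul]
    rfl
  have hμval : μ = (Nat.card H : ℂ)⁻¹ * ∑ y ∈ dosetFinset H (x i), repChar ρ y := by
    rw [← htr1, htr2, htrQ]
  -- conclude coefficientwise
  have hQπ' : ρ.asAlgebraHom (heckeElt H (x i)) * ρ.asAlgebraHom (avgIdemC H) =
      μ • ρ.asAlgebraHom (avgIdemC H) := hQπ
  ext g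
  rw [← mul_assoc, MonoidAlgebra.coeff_smul_apply, coeff_mul_centralIdem, coeff_mul_centralIdem,
    map_mul ρ.asAlgebraHom, hQπ', smul_mul_assoc, map_smul, smul_eq_mul, hμval]
  simp only [smul_eq_mul]
  ring
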